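/- If an ordered set partition π of [n] word-avoids the pattern 132, then for each i, max(B_i) > max(B_{i+1}) if and only if min(B_i) > max(B_{i+1}); i.e., maxdes(π) = pdes(π) for every 132-word-avoiding ordered set partition. -/

import Mathlib

/-- The word of an ordered set partition: concatenate the blocks,
listing the elements of each block in increasing order. -/
def word (π : List (Finset ℕ)) : List ℕ :=
  (π.map (fun B => B.sort (· ≤ ·))).flatten

/-- `π` is an ordered set partition of `[n] = {1,…,n}`: a list of nonempty,
pairwise disjoint finsets whose union is `{1,…,n}`. -/
def IsOSP (n : ℕ) (π : List (Finset ℕ)) : Prop :=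
  (∀ B ∈ π, B.Nonempty) ∧ π.Pairwise Disjoint ∧
    π.foldr (· ∪ ·) ∅ = Finset.Icc 1 n

noncomputable def minB (B : Finset ℕ) : ℕ := sInf (B : Set ℕ)
def maxB (B : Finset ℕ) : ℕ := B.sup id

/-- number of descents of a word -/
def desCount (w : List ℕ) : ℕ :=
  ((List.range (w.length - 1)).filter (fun i => w.getD (i + 1) 0 < w.getD i 0)).length

noncomputable def mindes (π : List (Finset ℕ)) : ℕ :=
  ((List.range (π.length - 1)).filter
    (fun i => minB (π.getD (i + 1) ∅) < minB (π.getD i ∅))).length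

def maxdes (π : List (Finset ℕ)) : ℕ :=
  ((List.range (π.length - 1)).filter
    (fun i => maxB (π.getD (i + 1) ∅) < maxB (π.getD i ∅))).length

noncomputable def pdes (π : List (Finset ℕ)) : ℕ :=
  ((List.range (π.length - 1)).filter
    (fun i => maxB (π.getD (i + 1) ∅) < minB (π.getD i ∅))).length

def Avoids12 (w : List ℕ) : Prop :=
  ¬ ∃ i j : ℕ, i < j ∧ j < w.length ∧ w.getD i 0 < w.getD j 0

def Avoids21 (w : List ℕ) : Prop :=
  ¬ ∃ i j : ℕ, i < j ∧ j < w.length ∧ w.getD j 0 < w.getD i 0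

def Avoids123 (w : List ℕ) : Prop :=
  ¬ ∃ i j k : ℕ, i < j ∧ j < k ∧ k < w.length ∧
    w.getD i 0 < w.getD j 0 ∧ w.getD j 0 < w.getD k 0

def Avoids132 (w : List ℕ) : Prop :=
  ¬ ∃ i j k : ℕ, i < j ∧ j < k ∧ k < w.length ∧
    w.getD i 0 < w.getD k 0 ∧ w.getD k 0 < w.getD j 0

def Avoids213 (w : List ℕ) : Prop :=
  ¬ ∃ i j k : ℕ, i < j ∧ j < k ∧ k < w.length ∧
    w.getD j 0 < w.getD i 0 ∧ w.getD i 0 < w.getD k 0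

def Avoids312 (w : List ℕ) : Prop :=
  ¬ ∃ i j k : ℕ, i < j ∧ j < k ∧ k < w.length ∧
    w.getD j 0 < w.getD k 0 ∧ w.getD k 0 < w.getD i 0

def Avoids321 (w : List ℕ) : Prop :=
  ¬ ∃ i j k : ℕ, i < j ∧ j < k ∧ k < w.length ∧
    w.getD k 0 < w.getD j 0 ∧ w.getD j 0 < w.getD i 0

/-- reverse-complement of an ordered set partition of `[n]` -/
def rcomp (n : ℕ) (π : List (Finset ℕ)) : List (Finset ℕ) :=
  (π.map (fun B => B.image (fun a => n + 1 - a))).reverse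

lemma minB_eq' (B : Finset ℕ) (hB : B.Nonempty) : sInf (B : Set ℕ) = B.min' hB := by
  apply le_antisymm
  · exact Nat.sInf_le (B.min'_mem hB)
  · exact B.min'_le _ (Nat.sInf_mem (Finset.coe_nonempty.mpr hB))

lemma maxB_eq' (B : Finset ℕ) (hB : B.Nonempty) : B.sup id = B.max' hB := by
  rw [Finset.max'_eq_sup', Finset.sup'_eq_sup]

lemma flatten_getD (L : List (List ℕ)) (i j : ℕ) (hi : i < L.length) (hj : j < L[i].length) :
    L.flatten.getD ((L.take i).flatten.length + j) 0 = L[i].getD j 0 ∧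
    (L.take i).flatten.length + j < L.flatten.length := by
  have hsplit : L = L.take i ++ L[i] :: L.drop (i+1) := by
    rw [← List.drop_eq_getElem_cons hi, List.take_append_drop]
  have hw : L.flatten = (L.take i).flatten ++ (L[i] :: L.drop (i+1)).flatten := by
    conv_lhs => rw [hsplit]
    rw [List.flatten_append]
  constructor
  · rw [hw, List.getD_append_right _ _ _ _ (Nat.le_add_right _ _),
      Nat.add_sub_cancel_left, List.flatten_cons, List.getD_append _ _ _ _ hj]
  · rw [hw, List.flatten_cons, List.length_append, List.length_append]
    omega

lemma take_succ_flatten_len (L : List (List ℕ)) (i : ℕ) (hi : i < L.length) :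
    (L.take (i+1)).flatten.length = (L.take i).flatten.length + L[i].length := by
  rw [List.take_succ, List.getElem?_eq_getElem hi]
  rw [List.flatten_append, List.length_append]
  simp

lemma key_lemma (π : List (Finset ℕ)) (hne : ∀ B ∈ π, B.Nonempty) (hd : π.Pairwise Disjoint)
    (ha : Avoids132 (word π)) (i : ℕ) (hi : i + 1 < π.length) :
    maxB (π.getD (i+1) ∅) < maxB (π.getD i ∅) ↔ maxB (π.getD (i+1) ∅) < minB (π.getD i ∅) := by
  have hi0 : i < π.length := by omega
  rw [List.getD_eq_getElem _ _ hi, List.getD_eq_getElem _ _ hi0]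
  set B := π[i] with hBdef
  set C := π[i+1] with hCdef
  have hB : B.Nonempty := hne _ (List.getElem_mem hi0)
  have hC : C.Nonempty := hne _ (List.getElem_mem hi)
  rw [minB, maxB, maxB, minB_eq' B hB, maxB_eq' B hB, maxB_eq' C hC]
  constructor
  · intro hlt
    by_contra hcon
    push_neg at hcon
    have hdisj : Disjoint B C :=
      (List.pairwise_iff_getElem.mp hd) i (i+1) hi0 hi (by omega)
    have hne' : B.min' hB ≠ C.max' hC := fun he =>
      (Finset.disjoint_left.mp hdisj (B.min'_mem hB)) (he ▸ C.max'_mem hC)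
    have h1 : B.min' hB < C.max' hC := lt_of_le_of_ne hcon hne'
    set L := π.map (fun B => B.sort (· ≤ ·)) with hL
    have hiL : i + 1 < L.length := by simpa [hL] using hi
    have hiL0 : i < L.length := by omega
    have hLi : L[i] = B.sort (· ≤ ·) := by simp [hL, hBdef]
    have hLi1 : L[i+1] = C.sort (· ≤ ·) := by simp [hL, hCdef]
    have hlenB : L[i].length = B.card := by rw [hLi, Finset.length_sort]
    have hlenC : L[i+1].length = C.card := by rw [hLi1, Finset.length_sort]
    have hcardB : 1 ≤ B.card := Finset.card_pos.mpr hB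
    have hcardC : 1 ≤ C.card := Finset.card_pos.mpr hC
    have hcardB2 : 2 ≤ B.card := by
      refine Finset.one_lt_card.mpr ⟨_, B.min'_mem hB, _, B.max'_mem hB, ?_⟩
      exact ne_of_lt (lt_trans h1 hlt)
    set p := (L.take i).flatten.length with hp
    have e1 := flatten_getD L i 0 hiL0 (by omega)
    have e2 := flatten_getD L i (B.card - 1) hiL0 (by omega)
    have e3 := flatten_getD L (i+1) (C.card - 1) hiL (by omega)
    have hq := take_succ_flatten_len L i hiL0
    have v1 : L[i].getD 0 0 = B.min' hB := by
      simp only [hLi]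
      rw [List.getD_eq_getElem _ _ (by rw [Finset.length_sort]; omega)]
      exact Finset.sorted_zero_eq_min'
    have v2 : L[i].getD (B.card - 1) 0 = B.max' hB := by
      simp only [hLi]
      rw [List.getD_eq_getElem _ _ (by rw [Finset.length_sort]; omega)]
      have h' : (B.sort (· ≤ ·)).length - 1 < (B.sort (· ≤ ·)).length := by
        rw [Finset.length_sort]; omega
      have hv := Finset.sorted_last_eq_max' (s := B) (h := h')
      simp only [Finset.length_sort] at hv
      exact hv
    have v3 : L[i+1].getD (C.card - 1) 0 = C.max' hC := by
      simp only [hLi1]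
      rw [List.getD_eq_getElem _ _ (by rw [Finset.length_sort]; omega)]
      have h' : (C.sort (· ≤ ·)).length - 1 < (C.sort (· ≤ ·)).length := by
        rw [Finset.length_sort]; omega
      have hv := Finset.sorted_last_eq_max' (s := C) (h := h')
      simp only [Finset.length_sort] at hv
      exact hv
    have hword : word π = L.flatten := rfl
    have w1 : (word π).getD p 0 = B.min' hB := by
      have := e1.1; rw [Nat.add_zero] at this
      rw [hword]; exact this.trans v1
    have w2 : (word π).getD (p + (B.card - 1)) 0 = B.max' hB := by
      rw [hword]; exact e2.1.trans v2
    have w3 : (word π).getD (p + B.card + (C.card - 1)) 0 = C.max' hC := by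
      rw [hword]
      have := e3.1
      rw [hq, hlenB] at this
      exact this.trans v3
    have wlen : p + B.card + (C.card - 1) < (word π).length := by
      rw [hword]
      have := e3.2
      rw [hq, hlenB] at this
      omega
    exact ha ⟨p, p + (B.card - 1), p + B.card + (C.card - 1), by omega, by omega, wlen,
      by rw [w1, w3]; exact h1, by rw [w3, w2]; exact hlt⟩
  · intro hlt
    exact lt_of_lt_of_le hlt (B.min'_le _ (B.max'_mem hB))

theorem stmt7 (n : ℕ) (π : List (Finset ℕ)) (h : IsOSP n π)
    (ha : Avoids132 (word π)) :
    (∀ i : ℕ, i + 1 < π.length →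
      (maxB (π.getD (i + 1) ∅) < maxB (π.getD i ∅) ↔
        maxB (π.getD (i + 1) ∅) < minB (π.getD i ∅))) ∧
    maxdes π = pdes π := by
  obtain ⟨hne, hd, -⟩ := h
  have key : ∀ i : ℕ, i + 1 < π.length →
      (maxB (π.getD (i + 1) ∅) < maxB (π.getD i ∅) ↔
        maxB (π.getD (i + 1) ∅) < minB (π.getD i ∅)) :=
    fun i hi => key_lemma π hne hd ha i hi
  refine ⟨key, ?_⟩
  unfold maxdes pdes
  congr 1
  apply List.filter_congr
  intro x hx
  rw [List.mem_range] at hx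
  have hx1 : x + 1 < π.length := by omega
  simp only [decide_eq_decide]
  exact key x hx1
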